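/- arXiv:2408.10519 — 5 statements merged into one kernel-verified Lean document; each statement's English description precedes it below -/
import Mathlib

section
/- Let T be a rooted tree of height h in which the vertices collectively hold k tokens, and consider a synchronous convergecast process where in each round every non-root vertex whose pending-token list is nonempty sends one token to its parent (a vertex's pending list consists of its own initial tokens plus tokens received from children). Then after at most h + k rounds, the root has received every token exactly once. -/
open Finset

/-- The multiset (of size ≤ 1) sent by vertex `v` in round `i`. -/
def outT {V τ : Type*} (sent : ℕ → V → Option τ) (i : ℕ) (v : V) : Multiset τ :=
  (sent i v).elim 0 (fun t => {t})

/-- Regrouping a sum over parent-fibers as a sum over the union of fibers. -/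
lemma sum_fiber {V M : Type*} [Fintype V] [DecidableEq V] [AddCommMonoid M]
    (parent : V → Option V) (B : Finset V) (f : V → M) :
    ∑ v ∈ B, ∑ u ∈ Finset.univ.filter (fun u => parent u = some v), f u
      = ∑ u ∈ B.biUnion (fun v => Finset.univ.filter (fun u => parent u = some v)), f u := by
  refine (Finset.sum_biUnion ?_).symm
  intro x _ y _ hxy
  simp only [Finset.disjoint_left, Finset.mem_filter, Finset.mem_univ, true_and]
  rintro a h1 h2
  rw [h1] at h2
  exact hxy (Option.some_inj.mp h2)

/-- Synchronous convergecast on a rooted tree of height `h` with `k` tokens in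
total: each vertex maintains a multiset of pending tokens (`s i v`); in each
round every non-root vertex with a nonempty pending multiset sends exactly one
of its tokens to its parent (the root absorbs tokens and never sends). Then
after `h + k` rounds the root has received every token exactly once, i.e., its
multiset equals the multiset union of all initial tokens. -/
theorem convergecast_completes {V τ : Type*} [Fintype V] [DecidableEq V] [DecidableEq τ]
    (parent : V → Option V) (r : V) (depth : V → ℕ) (h k : ℕ)
    (hroot : parent r = none)
    (honlyroot : ∀ v : V, parent v = none → v = r)
    (hdepth_root : depth r = 0)
    (hdepth : ∀ v u : V, parent v = some u → depth v = depth u + 1)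
    (hheight : ∀ v : V, depth v ≤ h)
    (s : ℕ → V → Multiset τ) (sent : ℕ → V → Option τ)
    (hsent_root : ∀ i : ℕ, sent i r = none)
    (hsent_some : ∀ (i : ℕ) (v : V), v ≠ r → s i v ≠ 0 →
      ∃ t ∈ s i v, sent i v = some t)
    (hsent_none : ∀ (i : ℕ) (v : V), s i v = 0 → sent i v = none)
    (hstep : ∀ (i : ℕ) (v : V), s (i + 1) v =
      (s i v - (sent i v).elim (0 : Multiset τ) (fun t => {t})) +
        ∑ u ∈ Finset.univ.filter (fun u => parent u = some v),
          (sent i u).elim (0 : Multiset τ) (fun t => {t}))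
    (hk : (∑ v : V, s 0 v).card = k) :
    s (h + k) r = ∑ v : V, s 0 v := by
  classical
  have hstep' : ∀ (i : ℕ) (v : V), s (i + 1) v =
      (s i v - outT sent i v) +
        ∑ u ∈ Finset.univ.filter (fun u => parent u = some v), outT sent i u := hstep
  -- basic facts
  have hdepth_pos : ∀ v : V, v ≠ r → 1 ≤ depth v := by
    intro v hv
    cases hp : parent v with
    | none => exact absurd (honlyroot v hp) hv
    | some p => rw [hdepth v p hp]; omega
  have hout_zero : ∀ i v, s i v = 0 → outT sent i v = 0 := by
    intro i v hz; simp [outT, hsent_none i v hz]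
  have hout_root : ∀ i, outT sent i r = 0 := by
    intro i; simp [outT, hsent_root i]
  have hout_le : ∀ i v, outT sent i v ≤ s i v := by
    intro i v
    by_cases hz : s i v = 0
    · rw [hout_zero i v hz]; exact bot_le
    · by_cases hv : v = r
      · subst hv; rw [hout_root]; exact bot_le
      · obtain ⟨t, ht, hs⟩ := hsent_some i v hv hz
        simpa [outT, hs, Multiset.singleton_le] using ht
  have hout_one : ∀ i v, v ≠ r → s i v ≠ 0 → (outT sent i v).card = 1 := by
    intro i v hv hz
    obtain ⟨t, ht, hs⟩ := hsent_some i v hv hz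
    simp [outT, hs]
  -- card version of the step
  have hcard_step : ∀ (i : ℕ) (v : V), (s (i + 1) v).card =
      ((s i v).card - (outT sent i v).card) +
        ∑ u ∈ Finset.univ.filter (fun u => parent u = some v), (outT sent i u).card := by
    intro i v
    rw [hstep' i v, Multiset.card_add, Multiset.card_sum]
    congr 1
    have := hout_le i v
    rw [← Multiset.card_sub this]
  have hcard_le : ∀ i v, (outT sent i v).card ≤ (s i v).card :=
    fun i v => Multiset.card_le_card (hout_le i v)
  -- region sums
  set R : ℕ → Finset V := fun d => Finset.univ.filter (fun u => u ≠ r ∧ d ≤ depth u) with hR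
  set E : ℕ → Finset V := fun d => Finset.univ.filter (fun u => u ≠ r ∧ depth u = d) with hE
  set W : ℕ → ℕ → ℕ := fun i d => ∑ u ∈ R d, (s i u).card with hW
  -- fiber union over R d is R (d+1)
  have hfiber : ∀ d : ℕ, 1 ≤ d →
      (R d).biUnion (fun v => Finset.univ.filter (fun u => parent u = some v)) = R (d + 1) := by
    intro d hd
    ext u
    simp only [hR, Finset.mem_biUnion, Finset.mem_filter, Finset.mem_univ, true_and]
    constructor
    · rintro ⟨p, ⟨hpr, hpd⟩, hpu⟩
      have hur : u ≠ r := by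
        intro h'; rw [h', hroot] at hpu; exact Option.some_ne_none _ hpu.symm
      exact ⟨hur, by rw [hdepth u p hpu]; omega⟩
    · rintro ⟨hur, hud⟩
      obtain ⟨p, hp⟩ : ∃ p, parent u = some p := by
        cases hp : parent u with
        | none => exact absurd (honlyroot u hp) hur
        | some p => exact ⟨p, rfl⟩
      refine ⟨p, ⟨?_, ?_⟩, hp⟩
      · intro h'
        have := hdepth u p hp
        rw [h', hdepth_root] at this
        omega
      · have := hdepth u p hp; omega
  -- split of region sums
  have hsplit : ∀ (d : ℕ) (g : V → ℕ), ∑ u ∈ R d, g u = ∑ u ∈ R (d+1), g u + ∑ u ∈ E d, g u := by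
    intro d g
    have hun : R d = R (d+1) ∪ E d := by
      ext u; simp only [hR, hE, Finset.mem_union, Finset.mem_filter, Finset.mem_univ, true_and]
      constructor
      · rintro ⟨h1, h2⟩
        rcases Nat.lt_or_ge (depth u) (d+1) with h' | h'
        · exact Or.inr ⟨h1, by omega⟩
        · exact Or.inl ⟨h1, h'⟩
      · rintro (⟨h1, h2⟩ | ⟨h1, h2⟩) <;> exact ⟨h1, by omega⟩
    rw [hun, Finset.sum_union]
    simp only [hR, hE, Finset.disjoint_left, Finset.mem_filter, Finset.mem_univ, true_and]
    rintro a ⟨_, h1⟩ ⟨_, h2⟩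
    omega
  -- key region identity: W i d = W (i+1) d + σ
  have hId1 : ∀ (i d : ℕ), 1 ≤ d →
      W i d = W (i+1) d + ∑ u ∈ E d, (outT sent i u).card := by
    intro i d hd
    have h1 : W (i+1) d = ∑ v ∈ R d, ((s i v).card - (outT sent i v).card)
        + ∑ u ∈ R (d+1), (outT sent i u).card := by
      rw [hW]
      simp only [hcard_step i]
      rw [Finset.sum_add_distrib, sum_fiber parent (R d) (fun u => (outT sent i u).card),
        hfiber d hd]
    have h2 : W i d = ∑ v ∈ R d, ((s i v).card - (outT sent i v).card)
        + ∑ u ∈ R d, (outT sent i u).card := by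
      rw [hW, ← Finset.sum_add_distrib]
      refine Finset.sum_congr rfl fun v _ => ?_
      have := hcard_le i v
      omega
    rw [h1, h2, hsplit d (fun u => (outT sent i u).card)]
    ring
  -- key step lemma
  have key : ∀ (i : ℕ) (v : V), v ≠ r → s (i+1) v ≠ 0 →
      ∃ w, w ≠ r ∧ s i w ≠ 0 ∧
        depth v + W (i+1) (depth v) + 1 ≤ depth w + W i (depth w) := by
    intro i v hv hnz
    have hd1 : 1 ≤ depth v := hdepth_pos v hv
    by_cases hEx : ∃ w, w ≠ r ∧ depth w = depth v ∧ s i w ≠ 0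
    · obtain ⟨w, hwr, hwd, hwz⟩ := hEx
      refine ⟨w, hwr, hwz, ?_⟩
      have hId := hId1 i (depth v) hd1
      have hwE : w ∈ E (depth v) := by
        simp only [hE, Finset.mem_filter, Finset.mem_univ, true_and]
        exact ⟨hwr, hwd⟩
      have hone : 1 ≤ ∑ u ∈ E (depth v), (outT sent i u).card := by
        calc 1 = (outT sent i w).card := (hout_one i w hwr hwz).symm
        _ ≤ _ := Finset.single_le_sum (f := fun u => (outT sent i u).card)
          (fun u _ => Nat.zero_le _) hwE
      rw [hwd]
      omega
    · push_neg at hEx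
      have hvz : s i v = 0 := hEx v hv rfl
      -- v received a token from some child u
      have hchild : ∃ u, parent u = some v ∧ s i u ≠ 0 := by
        by_contra hc
        push_neg at hc
        apply hnz
        rw [hstep' i v, hvz, hout_zero i v hvz]
        rw [Finset.sum_eq_zero]
        · simp
        · intro u hu
          simp only [Finset.mem_filter, Finset.mem_univ, true_and] at hu
          exact hout_zero i u (hc u hu)
      obtain ⟨u, hup, huz⟩ := hchild
      have hur : u ≠ r := by
        intro h'; rw [h', hroot] at hup; exact Option.some_ne_none _ hup.symm
      have hud : depth u = depth v + 1 := hdepth u v hup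
      refine ⟨u, hur, huz, ?_⟩
      have hId := hId1 i (depth v) hd1
      have hWeq : W i (depth v) = W i (depth v + 1) := by
        show ∑ u ∈ R (depth v), Multiset.card (s i u)
          = ∑ u ∈ R (depth v + 1), Multiset.card (s i u)
        rw [hsplit (depth v) (fun u => (s i u).card)]
        have hz0 : ∑ u ∈ E (depth v), Multiset.card (s i u) = 0 := by
          refine Finset.sum_eq_zero ?_
          intro w hw
          simp only [hE, Finset.mem_filter, Finset.mem_univ, true_and] at hw
          rw [hEx w hw.1 hw.2]
          simp
        omega
      rw [hud]
      omega
  -- main invariant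
  have main : ∀ (i : ℕ) (v : V), v ≠ r → s i v ≠ 0 →
      depth v + W i (depth v) + i ≤ h + k := by
    intro i
    induction i with
    | zero =>
      intro v hv hz
      have h1 : depth v ≤ h := hheight v
      have h2 : W 0 (depth v) ≤ k := by
        rw [hW, ← hk, Multiset.card_sum]
        exact Finset.sum_le_sum_of_subset (Finset.filter_subset _ _)
      omega
    | succ i ih =>
      intro v hv hz
      obtain ⟨w, hwr, hwz, hle⟩ := key i v hv hz
      have := ih w hwr hwz
      omega
  -- all non-root vertices empty at time h + k
  have hempty : ∀ v : V, v ≠ r → s (h + k) v = 0 := by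
    intro v hv
    by_contra hz
    have h1 := main (h + k) v hv hz
    have h2 := hdepth_pos v hv
    omega
  -- conservation of the total multiset
  have htot : ∀ i : ℕ, ∑ v : V, s i v = ∑ v : V, s 0 v := by
    intro i
    induction i with
    | zero => rfl
    | succ i ih =>
      rw [← ih]
      have h1 : ∑ v : V, s (i+1) v
          = ∑ v : V, (s i v - outT sent i v) + ∑ v : V, outT sent i v := by
        simp only [hstep' i]
        rw [Finset.sum_add_distrib,
          sum_fiber parent Finset.univ (fun u => outT sent i u)]
        congr 1
        refine Finset.sum_subset (Finset.subset_univ _) ?_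
        intro u _ hu
        simp only [Finset.mem_biUnion, Finset.mem_filter, Finset.mem_univ, true_and,
          not_exists] at hu
        cases hp : parent u with
        | none => rw [honlyroot u hp]; exact hout_root i
        | some p => exact absurd hp (hu p)
      rw [h1, ← Finset.sum_add_distrib]
      refine Finset.sum_congr rfl fun v _ => ?_
      exact tsub_add_cancel_of_le (hout_le i v)
  -- conclude
  rw [← htot (h + k)]
  exact (Finset.sum_eq_single r (fun b _ hb => hempty b hb)
    (fun hr => absurd (Finset.mem_univ r) hr)).symm
end

section
/- In the minimum-propagation process with parent pointers on a connected graph G (each vertex adopts as parent a neighbor from which it first received a strictly smaller value, re-pointing whenever it learns a yet smaller value), suppose all initial values are distinct and let v_min be the vertex with the global minimum. Then after D rounds (D = eccentricity of v_min), the parent pointers form a single spanning tree rooted at v_min, and for every vertex v the directed path from v to v_min in this tree is a shortest path in G. -/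
/-- Minimum propagation with parent pointers on a connected graph with distinct
initial values: in each round, a vertex seeing a strictly smaller neighbor value
adopts the smallest such value and re-points its parent to a minimizing
neighbor; otherwise it keeps its value and parent. Let `vmin` hold the global
minimum and let `d` bound the eccentricity of `vmin`. Then after `d` rounds all
values equal the global minimum, `vmin` has no parent, and every other vertex
has a parent adjacent to it whose distance to `vmin` is one less — i.e., the
parent pointers form a spanning tree rooted at `vmin` all of whose root-paths
are shortest paths in `G`. -/
theorem min_propagation_spanning_tree {V : Type*} [Fintype V]
    (G : SimpleGraph V) (hconn : G.Connected)
    (idv : V → ℕ) (hinj : Function.Injective idv)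
    (vmin : V) (hmin : ∀ u : V, idv vmin ≤ idv u)
    (rid : ℕ → V → ℕ) (par : ℕ → V → Option V)
    (h0 : ∀ v : V, rid 0 v = idv v) (hp0 : ∀ v : V, par 0 v = none)
    (hupd : ∀ (i : ℕ) (v : V),
      (∃ u : V, G.Adj v u ∧ rid i u < rid i v ∧
        (∀ w : V, G.Adj v w → rid i u ≤ rid i w) ∧
        rid (i + 1) v = rid i u ∧ par (i + 1) v = some u) ∨
      ((∀ w : V, G.Adj v w → rid i v ≤ rid i w) ∧
        rid (i + 1) v = rid i v ∧ par (i + 1) v = par i v))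
    (d : ℕ) (hd : ∀ u : V, G.dist u vmin ≤ d) :
    (∀ v : V, rid d v = idv vmin) ∧
    par d vmin = none ∧
    (∀ v : V, v ≠ vmin → ∃ u : V, par d v = some u ∧ G.Adj v u ∧
      G.dist u vmin + 1 = G.dist v vmin) := by
  set m := idv vmin with hm
  -- all values are at least m
  have hA : ∀ i v, m ≤ rid i v := by
    intro i
    induction i with
    | zero => intro v; rw [h0]; exact hmin v
    | succ i ih =>
      intro v
      rcases hupd i v with ⟨u, _, _, _, he, _⟩ | ⟨_, he, _⟩
      · rw [he]; exact ih u
      · rw [he]; exact ih v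
  have hadj_dist : ∀ v u : V, G.Adj v u → G.dist v vmin ≤ G.dist u vmin + 1 := by
    intro v u h
    calc G.dist v vmin ≤ G.dist v u + G.dist u vmin := hconn.dist_triangle
      _ = G.dist u vmin + 1 := by
          rw [SimpleGraph.dist_eq_one_iff_adj.mpr h]; omega
  -- every non-root has a neighbor strictly closer
  have hstep : ∀ v : V, v ≠ vmin →
      ∃ u : V, G.Adj v u ∧ G.dist u vmin + 1 = G.dist v vmin := by
    intro v hv
    obtain ⟨p, hp⟩ := (hconn v vmin).exists_walk_length_eq_dist
    cases p with
    | nil => exact absurd rfl hv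
    | @cons _ u _ h q =>
      refine ⟨u, h, ?_⟩
      have h1 : G.dist u vmin ≤ q.length := SimpleGraph.dist_le q
      have h2 : q.length + 1 = G.dist v vmin := by
        simpa [SimpleGraph.Walk.length_cons] using hp
      have h3 := hadj_dist v u h
      omega
  -- value m reaches v by time ≥ dist
  have hC : ∀ i v, G.dist v vmin ≤ i → rid i v = m := by
    intro i
    induction i with
    | zero =>
      intro v hdv
      have : v = vmin := by
        by_contra hne
        exact absurd hdv (by have := hconn.pos_dist_of_ne hne; omega)
      rw [this, h0]
    | succ i ih =>
      intro v hdv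
      have hvm : rid i vmin = m := ih vmin (by simp [SimpleGraph.dist_self])
      by_cases hv : v = vmin
      · subst hv
        rcases hupd i v with ⟨u, _, hlt, _, he, _⟩ | ⟨_, he, _⟩
        · exact absurd (hvm ▸ hlt) (not_lt.mpr (hA i u))
        · rw [he, hvm]
      · obtain ⟨u', hadj', hdu'⟩ := hstep v hv
        have hu'm : rid i u' = m := ih u' (by omega)
        rcases hupd i v with ⟨u, hadj, hlt, hmw, he, _⟩ | ⟨hle, he, _⟩
        · rw [he]
          exact le_antisymm (hu'm ▸ hmw u' hadj') (hA i u)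
        · rw [he]
          exact le_antisymm (hu'm ▸ hle u' hadj') (hA i v)
  -- value m reaches v no earlier than dist
  have hCc : ∀ i v, rid i v = m → G.dist v vmin ≤ i := by
    intro i
    induction i with
    | zero =>
      intro v hv
      rw [h0] at hv
      rw [hinj hv]
      simp [SimpleGraph.dist_self]
    | succ i ih =>
      intro v hv
      rcases hupd i v with ⟨u, hadj, _, _, he, _⟩ | ⟨_, he, _⟩
      · have := ih u (he ▸ hv)
        have := hadj_dist v u hadj
        omega
      · have := ih v (he ▸ hv)
        omega
  -- root has no parent
  have hroot : ∀ i, par i vmin = none := by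
    intro i
    induction i with
    | zero => exact hp0 vmin
    | succ i ih =>
      rcases hupd i vmin with ⟨u, _, hlt, _, _, _⟩ | ⟨_, _, hpe⟩
      · have hvm : rid i vmin = m := hC i vmin (by simp [SimpleGraph.dist_self])
        exact absurd (hvm ▸ hlt) (not_lt.mpr (hA i u))
      · rw [hpe, ih]
  -- parent invariant
  have hQ : ∀ i v, v ≠ vmin → rid i v = m →
      ∃ u : V, par i v = some u ∧ G.Adj v u ∧
        G.dist u vmin + 1 = G.dist v vmin := by
    intro i
    induction i with
    | zero =>
      intro v hv hrv
      rw [h0] at hrv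
      exact absurd (hinj hrv) hv
    | succ i ih =>
      intro v hv hrv
      rcases hupd i v with ⟨u, hadj, hlt, _, he, hpe⟩ | ⟨_, he, hpe⟩
      · refine ⟨u, hpe, hadj, ?_⟩
        have hum : rid i u = m := he ▸ hrv
        have hdu : G.dist u vmin ≤ i := hCc i u hum
        have hvnot : ¬ G.dist v vmin ≤ i := by
          intro hle
          have := hC i v hle
          omega
        have := hCc (i + 1) v hrv
        have := hadj_dist v u hadj
        omega
      · obtain ⟨u, hp, hadj, hdd⟩ := ih v hv (he ▸ hrv)
        exact ⟨u, hpe ▸ hp, hadj, hdd⟩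
  refine ⟨fun v => hC d v (hd v), hroot d, fun v hv => hQ d v hv (hC d v (hd v))⟩
end

section
/- In the minimum-propagation process with parent pointers, at the end of every round, the vertex holding a global minimum initial value has no parent (it never adopts a parent), and every vertex in its identifier-induced subtree is connected to it by a directed path that is a shortest path in G; hence that subtree has height at most the diameter D of G. -/
/-- Iterated parent pointers: `parIter p n v` is the vertex reached from `v`
after following `p` exactly `n` times (if defined). -/
def parIter {V : Type*} (p : V → Option V) : ℕ → V → Option V
  | 0, v => some v
  | n + 1, v => (p v).bind (parIter p n)

/-- Distance from `v` to the set of vertices with identifier `m`. -/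
noncomputable def distToMin {V : Type*} (G : SimpleGraph V) (idv : V → ℕ) (m : ℕ) (v : V) : ℕ :=
  sInf {n | ∃ w, idv w = m ∧ G.dist v w = n}

/-- In the minimum-propagation process with parent pointers, a vertex `vmin`
holding a global minimum initial value never adopts a parent, and every vertex
in its identifier-induced subtree (i.e., reaching `vmin` via parent pointers
with the same current value) is connected to `vmin` by a directed path that is
a shortest path in `G`; hence the subtree has height at most the diameter
bound `D`. -/
theorem min_subtree_shortest_paths {V : Type*} [Fintype V]
    (G : SimpleGraph V) (hconn : G.Connected)
    (idv : V → ℕ) (vmin : V) (hmin : ∀ u : V, idv vmin ≤ idv u)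
    (rid : ℕ → V → ℕ) (par : ℕ → V → Option V)
    (h0 : ∀ v : V, rid 0 v = idv v) (hp0 : ∀ v : V, par 0 v = none)
    (hupd : ∀ (i : ℕ) (v : V),
      (∃ u : V, G.Adj v u ∧ rid i u < rid i v ∧
        (∀ w : V, G.Adj v w → rid i u ≤ rid i w) ∧
        rid (i + 1) v = rid i u ∧ par (i + 1) v = some u) ∨
      ((∀ w : V, G.Adj v w → rid i v ≤ rid i w) ∧
        rid (i + 1) v = rid i v ∧ par (i + 1) v = par i v))
    (D : ℕ) (hD : ∀ u w : V, G.dist u w ≤ D) :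
    (∀ i : ℕ, par i vmin = none) ∧
    (∀ (i n : ℕ) (v : V), rid i v = rid i vmin →
      parIter (par i) n v = some vmin →
      n = G.dist v vmin ∧ n ≤ D) := by
  set m := idv vmin with hm
  set dM : V → ℕ := distToMin G idv m with hdM
  -- basic facts about dM
  have dM_le : ∀ v w, idv w = m → dM v ≤ G.dist v w := by
    intro v w hw
    exact Nat.sInf_le ⟨w, hw, rfl⟩
  have dM_spec : ∀ v : V, ∃ w, idv w = m ∧ G.dist v w = dM v := by
    intro v
    have hne : {n | ∃ w, idv w = m ∧ G.dist v w = n}.Nonempty :=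
      ⟨G.dist v vmin, vmin, rfl, rfl⟩
    exact Nat.sInf_mem hne
  -- rid is non-increasing in time
  have mono : ∀ i v, rid (i + 1) v ≤ rid i v := by
    intro i v
    rcases hupd i v with ⟨u, _, hlt, _, heq, _⟩ | ⟨_, heq, _⟩ <;> omega
  -- rid is bounded below by the global minimum
  have lb : ∀ i v, m ≤ rid i v := by
    intro i
    induction i with
    | zero => intro v; rw [h0]; exact hmin v
    | succ i ih =>
      intro v
      rcases hupd i v with ⟨u, _, _, _, heq, _⟩ | ⟨_, heq, _⟩
      · rw [heq]; exact ih u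
      · rw [heq]; exact ih v
  -- vmin keeps its value and never adopts a parent
  have minfix : ∀ i, rid i vmin = m ∧ par i vmin = none := by
    intro i
    induction i with
    | zero => exact ⟨h0 vmin, hp0 vmin⟩
    | succ i ih =>
      rcases hupd i vmin with ⟨u, _, hlt, _, heq, hpeq⟩ | ⟨_, heq, hpeq⟩
      · exfalso
        have h1 := lb i u
        have h2 := ih.1
        omega
      · exact ⟨heq.trans ih.1, hpeq.trans ih.2⟩
  -- backward spread: within i rounds, everything within distance i of a minimum holds m
  have B : ∀ i v w, idv w = m → G.dist v w ≤ i → rid i v = m := by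
    intro i
    induction i with
    | zero =>
      intro v w hw hd
      have hd0 : G.dist v w = 0 := Nat.le_zero.mp hd
      have hvw : v = w := ((hconn v w).dist_eq_zero_iff).mp hd0
      rw [h0, hvw]; exact hw
    | succ i ih =>
      intro v w hw hd
      by_cases hd' : G.dist v w ≤ i
      · have h1 := ih v w hw hd'
        have h2 := mono i v
        have h3 := lb (i + 1) v
        omega
      · have hdist : G.dist v w = i + 1 := by omega
        obtain ⟨p, hp⟩ := (hconn v w).exists_walk_length_eq_dist
        rw [hdist] at hp
        cases p with
        | nil => simp at hp
        | @cons _ x _ hadj q =>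
          have hq : q.length = i := by simpa using hp
          have hxw : G.dist x w ≤ i := hq ▸ SimpleGraph.dist_le q
          have hx : rid i x = m := ih x w hw hxw
          rcases hupd i v with ⟨u, _, _, hmr, heq, _⟩ | ⟨hmr, heq, _⟩
          · have h1 := hmr x hadj
            have h2 := lb (i + 1) v
            omega
          · have h1 := hmr x hadj
            have h2 := lb (i + 1) v
            omega
  -- forward spread: a vertex holding m at round i is within distance i of a minimum
  have A : ∀ i v, rid i v = m → dM v ≤ i := by
    intro i
    induction i with
    | zero =>
      intro v hv
      rw [h0] at hv
      have := dM_le v v hv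
      simpa [SimpleGraph.dist_self] using this
    | succ i ih =>
      intro v hv
      rcases hupd i v with ⟨u, hadj, _, _, heq, _⟩ | ⟨_, heq, _⟩
      · have hu : rid i u = m := by omega
        obtain ⟨w, hw, hdw⟩ := dM_spec u
        have hdMu : dM u ≤ i := ih u hu
        have h1 : G.dist v w ≤ G.dist v u + G.dist u w := hconn.dist_triangle
        have h2 : G.dist v u ≤ 1 := by
          have := SimpleGraph.dist_le hadj.toWalk
          simpa using this
        have := dM_le v w hw
        omega
      · have := ih v (by omega); omega
  -- edge invariant: parent edges of vertices holding m decrease dM by exactly one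
  have Q : ∀ i v u, par i v = some u → rid i v = m →
      G.Adj v u ∧ rid i u = m ∧ dM v = dM u + 1 := by
    intro i
    induction i with
    | zero => intro v u hpar; rw [hp0] at hpar; exact absurd hpar (by simp)
    | succ i ih =>
      intro v u hpar hv
      rcases hupd i v with ⟨u', hadj, hlt, _, heq, hpeq⟩ | ⟨_, heq, hpeq⟩
      · have huu : u' = u := by rw [hpar] at hpeq; exact (Option.some.inj hpeq).symm
        rw [huu] at hadj hlt heq
        have hu : rid i u = m := by omega
        have hu' : rid (i + 1) u = m := by
          have h1 := mono i u
          have h2 := lb (i + 1) u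
          omega
        refine ⟨hadj, hu', ?_⟩
        -- rid i v ≠ m, so dM v ≥ i + 1
        have hvne : rid i v ≠ m := by omega
        obtain ⟨w0, hw0, hd0⟩ := dM_spec v
        have hdMv_ge : i + 1 ≤ dM v := by
          by_contra hc
          exact hvne (B i v w0 hw0 (by omega))
        have hdMv_le : dM v ≤ i + 1 := A (i + 1) v hv
        have hdMu_le : dM u ≤ i := A i u hu
        -- dM v ≤ dM u + 1
        obtain ⟨w1, hw1, hd1⟩ := dM_spec u
        have h1 : G.dist v w1 ≤ G.dist v u + G.dist u w1 := hconn.dist_triangle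
        have h2 : G.dist v u ≤ 1 := by
          have := SimpleGraph.dist_le hadj.toWalk
          simpa using this
        have h3 := dM_le v w1 hw1
        omega
      · have hpar' : par i v = some u := hpeq ▸ hpar
        have hv' : rid i v = m := by omega
        obtain ⟨hadj, hu, hdm⟩ := ih v u hpar' hv'
        have hu' : rid (i + 1) u = m := by
          have h1 := mono i u
          have h2 := lb (i + 1) u
          omega
        exact ⟨hadj, hu', hdm⟩
  -- chain lemma
  have C : ∀ (n i : ℕ) (v : V), rid i v = m → parIter (par i) n v = some vmin →
      dM v = n ∧ G.dist v vmin ≤ n := by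
    intro n
    induction n with
    | zero =>
      intro i v _ hchain
      have hv : v = vmin := Option.some.inj hchain
      subst hv
      have h1 : dM v ≤ 0 := by
        have := dM_le v v rfl
        simpa [SimpleGraph.dist_self] using this
      refine ⟨Nat.le_zero.mp h1, ?_⟩
      rw [SimpleGraph.dist_self]
    | succ n ih =>
      intro i v hv hchain
      simp only [parIter] at hchain
      cases hpv : par i v with
      | none => rw [hpv] at hchain; simp at hchain
      | some u =>
        rw [hpv] at hchain
        simp only [Option.bind_some] at hchain
        obtain ⟨hadj, hu, hdm⟩ := Q i v u hpv hv
        obtain ⟨hdMu, hdu⟩ := ih i u hu hchain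
        have h1 : G.dist v vmin ≤ G.dist v u + G.dist u vmin := hconn.dist_triangle
        have h2 : G.dist v u ≤ 1 := by
          have := SimpleGraph.dist_le hadj.toWalk
          simpa using this
        exact ⟨by omega, by omega⟩
  refine ⟨fun i => (minfix i).2, fun i n v hvid hchain => ?_⟩
  have hv : rid i v = m := hvid.trans (minfix i).1
  obtain ⟨hdm, hle⟩ := C n i v hv hchain
  have h1 : dM v ≤ G.dist v vmin := dM_le v vmin rfl
  have h2 := hD v vmin
  exact ⟨by omega, by omega⟩
end

section
/- In the minimum-propagation process with parent pointers on a finite graph, at the end of every round, for every directed path v_1 → v_2 → … → v_t in the parent-pointer graph (each v_j's parent is v_{j+1}), the current values satisfy rid(v_1) ≥ rid(v_2) ≥ … ≥ rid(v_t). -/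
/-- In the minimum-propagation process with parent pointers on a finite graph
(a vertex adopts a minimizing strictly-smaller neighbor as parent, else keeps
its value and parent), at the end of every round the values `rid` are
non-increasing along every directed parent-pointer path. -/
theorem rid_nonincreasing_along_paths {V : Type*} [Fintype V]
    (G : SimpleGraph V)
    (idv : V → ℕ) (rid : ℕ → V → ℕ) (par : ℕ → V → Option V)
    (h0 : ∀ v : V, rid 0 v = idv v) (hp0 : ∀ v : V, par 0 v = none)
    (hupd : ∀ (i : ℕ) (v : V),
      (∃ u : V, G.Adj v u ∧ rid i u < rid i v ∧
        (∀ w : V, G.Adj v w → rid i u ≤ rid i w) ∧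
        rid (i + 1) v = rid i u ∧ par (i + 1) v = some u) ∨
      ((∀ w : V, G.Adj v w → rid i v ≤ rid i w) ∧
        rid (i + 1) v = rid i v ∧ par (i + 1) v = par i v)) :
    ∀ (i : ℕ) (v u : V),
      Relation.ReflTransGen (fun a b => par i a = some b) v u →
      rid i u ≤ rid i v := by
  have hmono : ∀ (i : ℕ) (v : V), rid (i + 1) v ≤ rid i v := by
    intro i v
    rcases hupd i v with ⟨u, _, hlt, _, heq, _⟩ | ⟨_, heq, _⟩
    · omega
    · omega
  have hstep : ∀ (i : ℕ) (a b : V), par i a = some b → rid i b ≤ rid i a := by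
    intro i
    induction i with
    | zero => intro a b h; rw [hp0] at h; exact absurd h (by simp)
    | succ i ih =>
      intro a b h
      rcases hupd i a with ⟨u, _, hlt, _, heq, hpeq⟩ | ⟨_, heq, hpeq⟩
      · rw [hpeq] at h
        cases Option.some.inj h
        rw [heq]; exact hmono i b
      · rw [hpeq] at h
        have := ih a b h
        have := hmono i b
        omega
  intro i v u h
  induction h with
  | refl => exact le_refl _
  | tail _ hlast ih => exact le_trans (hstep i _ _ hlast) ih
end

section
/- Fix integers B ≥ 1, L ≥ 1 and set M = ⌈L/B⌉ and P = ⌈(log₂ M)/B⌉ (assume P ≥ 1). In the pipelined broadcast of an L-bit string over a path of length d, where in each iteration the next P of the M pieces are forwarded one hop, the last piece of the string arrives at the far end of the path after at most d + ⌈M/P⌉ − 1 iterations. -/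
/-- Pipelined broadcast bound: an `L`-bit string is divided into `M = ⌈L/B⌉`
pieces, of which `P = ⌈(log₂ M)/B⌉` can be forwarded one hop per iteration.
`pos t m` is the node (on a directed path with `d` edges) holding piece `m`
after iteration `t`: a piece advances one hop in an iteration iff it has not
reached the end and fewer than `P` earlier pieces sit at the same node (each
node forwards the next `P` pieces it holds, in order). Then after at most
`d + ⌈M/P⌉ − 1` iterations every piece — in particular the last one — has
arrived at the far end of the path. -/
theorem pipelined_broadcast (B L d : ℕ) (hB : 1 ≤ B) (hL : 1 ≤ L)
    (M P : ℕ) (hM : M = (L + B - 1) / B) (hP : P = (Nat.clog 2 M + B - 1) / B)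
    (hP1 : 1 ≤ P)
    (pos : ℕ → ℕ → ℕ)
    (h0 : ∀ m : ℕ, pos 0 m = 0)
    (hstep : ∀ (t m : ℕ), 1 ≤ m → m ≤ M →
      pos (t + 1) m =
        if pos t m < d ∧
            ((Finset.Ico 1 m).filter (fun m' => pos t m' = pos t m)).card < P
        then pos t m + 1 else pos t m) :
    ∀ m : ℕ, 1 ≤ m → m ≤ M → pos (d + (M + P - 1) / P - 1) m = d := by
  have hP0 : 0 < P := hP1
  -- Main invariant: piece m (in wave k = (m-1)/P) satisfies
  -- pos t m ≤ d and min d (t - k) ≤ pos t m.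
  have key : ∀ t, ∀ m, 1 ≤ m → m ≤ M →
      pos t m ≤ d ∧ min d (t - (m - 1) / P) ≤ pos t m := by
    intro t
    induction t with
    | zero =>
      intro m h1 h2
      rw [h0]
      exact ⟨Nat.zero_le _, by simp⟩
    | succ t ih =>
      intro m h1 h2
      obtain ⟨hub, hlb⟩ := ih m h1 h2
      rw [hstep t m h1 h2]
      by_cases hc : pos t m < d ∧
          ((Finset.Ico 1 m).filter (fun m' => pos t m' = pos t m)).card < P
      · rw [if_pos hc]
        refine ⟨hc.1, ?_⟩
        rw [min_le_iff] at hlb ⊢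
        omega
      · rw [if_neg hc]
        refine ⟨hub, ?_⟩
        push_neg at hc
        by_cases hd : pos t m < d
        · have hcard := hc hd
          set k := (m - 1) / P with hk
          rw [min_le_iff] at hlb ⊢
          by_cases ht : t + 1 - k ≤ pos t m
          · exact Or.inr ht
          · exfalso
            push_neg at ht
            have htk : t - k ≤ pos t m := by
              rcases hlb with h | h
              · omega
              · exact h
            have hpe : pos t m = t - k := by omega
            have hkt : k ≤ t := by omega
            -- every piece counted in the filter lies in wave k, so fewer than P of them
            have hsub : (Finset.Ico 1 m).filter (fun m' => pos t m' = pos t m)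
                ⊆ Finset.Ico (k * P + 1) m := by
              intro m' hm'
              simp only [Finset.mem_filter, Finset.mem_Ico] at hm' ⊢
              obtain ⟨⟨hm1, hm2⟩, heq⟩ := hm'
              refine ⟨?_, hm2⟩
              by_contra hlt
              push_neg at hlt
              have hkPm : m' ≤ k * P := by omega
              have hkP1 : 1 ≤ k * P := by omega
              have hk1 : 1 ≤ k := by
                rcases Nat.eq_zero_or_pos k with h | h
                · rw [h, zero_mul] at hkP1; omega
                · exact h
              have hk' : (m' - 1) / P ≤ k - 1 := by
                have hle1 : m' - 1 ≤ k * P - 1 := by omega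
                have hmulc : P * (k - 1) + P = P * k := by
                  rw [← Nat.mul_succ]
                  congr 1
                  omega
                have hcomm : k * P = P * k := Nat.mul_comm _ _
                calc (m' - 1) / P ≤ (k * P - 1) / P := Nat.div_le_div_right hle1
                  _ ≤ k - 1 := by
                    rw [Nat.div_le_iff_le_mul_add_pred hP0]
                    omega
              have := (ih m' hm1 (le_trans (le_of_lt hm2) h2)).2
              rw [min_le_iff] at this
              -- pos t m' ≥ t - (k-1) > t - k = pos t m' : contradiction
              have h1' : t - (m' - 1) / P ≥ t - k + 1 := by omega
              rcases this with h | h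
              · omega
              · omega
            have hle := Finset.card_le_card hsub
            rw [Nat.card_Ico] at hle
            have hdm : P * k + (m - 1) % P = m - 1 := Nat.div_add_mod (m - 1) P
            have hmod : (m - 1) % P < P := Nat.mod_lt _ hP0
            have : k * P = P * k := Nat.mul_comm _ _
            omega
        · -- pos t m = d
          push_neg at hd
          rw [min_le_iff]
          omega
  intro m h1 h2
  obtain ⟨hub, hlb⟩ := key (d + (M + P - 1) / P - 1) m h1 h2
  have hMP : (M + P - 1) / P = (M - 1) / P + 1 := by
    have : M + P - 1 = (M - 1) + P := by omega
    rw [this, Nat.add_div_right _ hP0]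
  have hk : (m - 1) / P ≤ (M - 1) / P := Nat.div_le_div_right (by omega)
  rw [min_le_iff] at hlb
  omega
end
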